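/- Let Z be a real topological vector space, C ⊆ Z a closed convex cone with 0 ∈ C, C ≠ Z and nonempty interior, and e ∈ int C. Let S be a nonempty set, F : S → Z a function, and ε ≥ 0 a real number. Then x̄ ∈ S satisfies F(x) ∉ F(x̄) − ε•e − int C for all x ∈ S (i.e., x̄ is an ε·e-weakly efficient solution) if, and only if, there exists y ∈ Z such that τ_{y,e}(F(x̄)) ≤ τ_{y,e}(F(x)) + ε for all x ∈ S. -/

import Mathlib

open Set Filter Topology Pointwise
set_option linter.unusedSectionVars false

section Aux

variable {Z : Type*} [AddCommGroup Z] [Module ℝ Z] [TopologicalSpace Z]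
    [IsTopologicalAddGroup Z] [ContinuousSMul ℝ Z]
    {C : Set Z} {e : Z}

/-- positive scaling preserves interior of C -/
lemma aux_smul_int (hCsmul : ∀ t : ℝ, 0 ≤ t → ∀ c ∈ C, t • c ∈ C)
    {t : ℝ} (ht : 0 < t) {u : Z} (hu : u ∈ interior C) : t • u ∈ interior C := by
  have hopen : IsOpen (t • interior C) := isOpen_interior.smul₀ ht.ne'
  have hsub : t • interior C ⊆ C := by
    rintro _ ⟨v, hv, rfl⟩
    exact hCsmul t ht.le v (interior_subset hv)
  exact interior_maximal hsub hopen (smul_mem_smul_set hu)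

/-- C + interior C ⊆ interior C -/
lemma aux_add_int (hCadd : ∀ c₁ ∈ C, ∀ c₂ ∈ C, c₁ + c₂ ∈ C)
    {c u : Z} (hc : c ∈ C) (hu : u ∈ interior C) : c + u ∈ interior C := by
  have hopen : IsOpen ((fun z => c + z) '' interior C) :=
    (isOpenMap_add_left c) _ isOpen_interior
  have hsub : (fun z => c + z) '' interior C ⊆ C := by
    rintro _ ⟨v, hv, rfl⟩
    exact hCadd c hc v (interior_subset hv)
  exact interior_maximal hsub hopen ⟨u, hu, rfl⟩

lemma aux_zero_not_int (hCsmul : ∀ t : ℝ, 0 ≤ t → ∀ c ∈ C, t • c ∈ C)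
    (hCne : C ≠ univ) : (0 : Z) ∉ interior C := by
  intro h0
  apply hCne
  ext z
  simp only [mem_univ, iff_true]
  have htend : Tendsto (fun t : ℝ => t • z) (𝓝[>] 0) (𝓝 (0 : Z)) := by
    have : Tendsto (fun t : ℝ => t • z) (𝓝 0) (𝓝 ((0:ℝ) • z)) :=
      (tendsto_id : Tendsto id (𝓝 (0:ℝ)) (𝓝 0)).smul_const z
    simpa using this.mono_left nhdsWithin_le_nhds
  have hev : ∀ᶠ t in 𝓝[>] (0:ℝ), t • z ∈ interior C :=
    htend.eventually (isOpen_interior.mem_nhds h0)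
  obtain ⟨t, ht, htz⟩ := (hev.and self_mem_nhdsWithin).exists
  have : t⁻¹ • (t • z) ∈ C :=
    hCsmul t⁻¹ (inv_nonneg.mpr htz.le) _ (interior_subset ht)
  rwa [smul_smul, inv_mul_cancel₀ (ne_of_gt htz), one_smul] at this

lemma aux_neg_e_not_mem (hCadd : ∀ c₁ ∈ C, ∀ c₂ ∈ C, c₁ + c₂ ∈ C)
    (hCsmul : ∀ t : ℝ, 0 ≤ t → ∀ c ∈ C, t • c ∈ C)
    (hCne : C ≠ univ) (he : e ∈ interior C) : -e ∉ C := by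
  intro h
  have := aux_add_int hCadd h he
  rw [neg_add_cancel] at this
  exact aux_zero_not_int hCsmul hCne this

/-- the scalarization set is nonempty -/
lemma aux_nonempty (hCsmul : ∀ t : ℝ, 0 ≤ t → ∀ c ∈ C, t • c ∈ C)
    (he : e ∈ interior C) (w : Z) : ∃ t : ℝ, w + t • e ∈ C := by
  have htend : Tendsto (fun t : ℝ => t⁻¹ • w + e) atTop (𝓝 ((0:Z) + e)) := by
    exact Tendsto.add
      (by simpa using ((tendsto_inv_atTop_zero : Tendsto (fun t : ℝ => t⁻¹) atTop (𝓝 0)).smul_const w)) tendsto_const_nhds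
  rw [zero_add] at htend
  have hev : ∀ᶠ t : ℝ in atTop, t⁻¹ • w + e ∈ interior C :=
    htend.eventually (isOpen_interior.mem_nhds he)
  obtain ⟨t, ht, htpos⟩ := (hev.and (eventually_gt_atTop 0)).exists
  refine ⟨t, ?_⟩
  have := hCsmul t htpos.le _ (interior_subset ht)
  rwa [smul_add, smul_smul, mul_inv_cancel₀ (ne_of_gt htpos), one_smul] at this

/-- the scalarization set is bounded below -/
lemma aux_bdd (hCclosed : IsClosed C)
    (hCadd : ∀ c₁ ∈ C, ∀ c₂ ∈ C, c₁ + c₂ ∈ C)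
    (hCsmul : ∀ t : ℝ, 0 ≤ t → ∀ c ∈ C, t • c ∈ C)
    (hCne : C ≠ univ) (he : e ∈ interior C) (w : Z) :
    BddBelow {t : ℝ | w + t • e ∈ C} := by
  by_contra hbd
  rw [not_bddBelow_iff] at hbd
  have hbd' : ∀ n : ℕ, ∃ t : ℝ, w + t • e ∈ C ∧ t < -(n + 1) := by
    intro n
    obtain ⟨t, ht, htlt⟩ := hbd (-(n + 1))
    exact ⟨t, ht, htlt⟩
  choose t ht htlt using hbd'
  have htne : ∀ n, t n < 0 := fun n => (htlt n).trans_le (neg_nonpos.mpr (by positivity))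
  have hc : ∀ n, (-(t n))⁻¹ • w - e ∈ C := by
    intro n
    have := hCsmul (-(t n))⁻¹ (inv_nonneg.mpr (by linarith [htne n])) _ (ht n)
    rwa [smul_add, smul_smul, show (-(t n))⁻¹ * t n = -1 by
      rw [inv_neg, neg_mul, inv_mul_cancel₀ (htne n).ne], neg_one_smul,
      ← sub_eq_add_neg] at this
  have hlim : Tendsto (fun n => (-(t n))⁻¹ • w - e) atTop (𝓝 ((0:Z) - e)) := by
    refine Tendsto.sub ?_ tendsto_const_nhds
    have h1 : Tendsto (fun n : ℕ => -(t n)) atTop atTop :=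
      tendsto_atTop_mono (fun n => by have := htlt n; push_cast; linarith)
        tendsto_natCast_atTop_atTop
    simpa using (tendsto_inv_atTop_zero.comp h1).smul_const w
  rw [zero_sub] at hlim
  exact aux_neg_e_not_mem hCadd hCsmul hCne he
    (hCclosed.mem_of_tendsto hlim (Filter.Eventually.of_forall hc))

end Aux

noncomputable def tauReal {Z : Type*} [AddCommGroup Z] [Module ℝ Z]
    (C : Set Z) (e y z : Z) : ℝ :=
  sInf {t : ℝ | y + t • e - z ∈ C}

theorem stmt18 {Z : Type*} [AddCommGroup Z] [Module ℝ Z] [TopologicalSpace Z]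
    [IsTopologicalAddGroup Z] [ContinuousSMul ℝ Z]
    (C : Set Z) (hCclosed : IsClosed C)
    (hCadd : ∀ c₁ ∈ C, ∀ c₂ ∈ C, c₁ + c₂ ∈ C)
    (hCsmul : ∀ t : ℝ, 0 ≤ t → ∀ c ∈ C, t • c ∈ C)
    (hC0 : (0 : Z) ∈ C) (hCne : C ≠ univ)
    (e : Z) (he : e ∈ interior C)
    {S : Type*} [Nonempty S] (F : S → Z) (ε : ℝ) (hε : 0 ≤ ε) (xbar : S) :
    (∀ x : S, F xbar - ε • e - F x ∉ interior C) ↔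
      ∃ y : Z, ∀ x : S, tauReal C e y (F xbar) ≤ tauReal C e y (F x) + ε := by
  have hsetrw : ∀ y z : Z, {t : ℝ | y + t • e - z ∈ C} = {t : ℝ | (y - z) + t • e ∈ C} := by
    intro y z; ext t; simp only [mem_setOf_eq]; rw [add_sub_right_comm]
  have hne : ∀ y z : Z, ({t : ℝ | y + t • e - z ∈ C}).Nonempty := by
    intro y z; rw [hsetrw]; exact aux_nonempty hCsmul he (y - z)
  have hbdd : ∀ y z : Z, BddBelow {t : ℝ | y + t • e - z ∈ C} := by
    intro y z; rw [hsetrw]; exact aux_bdd hCclosed hCadd hCsmul hCne he (y - z)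
  constructor
  · intro hw
    refine ⟨F xbar, fun x => ?_⟩
    have htau0 : tauReal C e (F xbar) (F xbar) = 0 := by
      apply le_antisymm
      · apply csInf_le (hbdd _ _)
        simp [hC0]
      · apply le_csInf (hne _ _)
        intro t ht
        simp only [mem_setOf_eq, add_sub_cancel_left] at ht
        by_contra hneg
        push_neg at hneg
        have : (-t)⁻¹ • (t • e) ∈ C := hCsmul _ (inv_nonneg.mpr (by linarith)) _ ht
        rw [smul_smul, show (-t)⁻¹ * t = -1 by
          rw [inv_neg, neg_mul, inv_mul_cancel₀ hneg.ne], neg_one_smul] at this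
        exact aux_neg_e_not_mem hCadd hCsmul hCne he this
    rw [htau0]
    have hge : -ε ≤ tauReal C e (F xbar) (F x) := by
      apply le_csInf (hne _ _)
      intro t ht
      simp only [mem_setOf_eq] at ht
      by_contra hlt
      push_neg at hlt
      apply hw x
      have hpos : (0:ℝ) < -ε - t := by linarith
      have h1 : (-ε - t) • e ∈ interior C := aux_smul_int hCsmul hpos he
      have := aux_add_int hCadd ht h1
      have heq : F xbar + t • e - F x + (-ε - t) • e = F xbar - ε • e - F x := by
        rw [sub_smul, neg_smul]
        abel
      rwa [heq] at this
    linarith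
  · rintro ⟨y, hy⟩ x hx
    -- F xbar - ε • e - F x ∈ interior C; get δ > 0
    have htend : Tendsto (fun δ : ℝ => F xbar - ε • e - F x - δ • e) (𝓝[>] 0)
        (𝓝 (F xbar - ε • e - F x - (0:ℝ) • e)) := by
      exact ((tendsto_const_nhds.sub ((continuous_id.smul continuous_const).tendsto 0)).mono_left
        nhdsWithin_le_nhds)
    rw [zero_smul, sub_zero] at htend
    have hev : ∀ᶠ δ in 𝓝[>] (0:ℝ), F xbar - ε • e - F x - δ • e ∈ interior C :=
      htend.eventually (isOpen_interior.mem_nhds hx)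
    obtain ⟨δ, hδmem, hδpos⟩ := (hev.and self_mem_nhdsWithin).exists
    have hkey : tauReal C e y (F x) + (ε + δ) ≤ tauReal C e y (F xbar) := by
      apply le_csInf (hne _ _)
      intro t ht
      simp only [mem_setOf_eq] at ht
      have : t - (ε + δ) ∈ {s : ℝ | y + s • e - F x ∈ C} := by
        simp only [mem_setOf_eq]
        have := hCadd _ ht _ (interior_subset hδmem)
        have heq : y + t • e - F xbar + (F xbar - ε • e - F x - δ • e)
            = y + (t - (ε + δ)) • e - F x := by
          rw [sub_smul, add_smul]
          abel
        rwa [heq] at this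
      have h2 : tauReal C e y (F x) ≤ t - (ε + δ) := csInf_le (hbdd y (F x)) this
      linarith
    have := hy x
    have hδ0 : (0:ℝ) < δ := hδpos
    unfold tauReal at *
    linarith
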